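/- Assume additionally that D is a differentiation basis (for f ∈ L¹, the averages f_{Q_{j,k(j,x)}} over the cube at level j containing x converge to f(x) for a.e. x). If |⟨f, ψ^λ_{j,k}⟩| ≤ C·μ(Q_{j,k})^{α+1/2} for all j,k,λ, then |f(x) − f(y)| ≤ (2C·B^α·√(B(B−1)) / (B^α − (B−1)^α)) · δ_D(x,y)^α for almost every pair x,y ∈ X. -/

import Mathlib

open MeasureTheory Set

/-- A dyadic family with inheritance coefficient `B` on a probability space `(X, μ)`:
nested finite partitions `cubes j` of `X` into measurable sets of positive measure,
`cubes 0 = {univ}`, each cube at level `j+1` strictly contained in a unique cube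
(its first ancestor) at level `j`, and `μ(ancestor) ≤ B · μ(child)`. -/
structure DyadicFamily {X : Type*} [MeasurableSpace X] (μ : MeasureTheory.Measure X)
    (B : ℝ) where
  cubes : ℕ → Set (Set X)
  finiteLevel : ∀ j, (cubes j).Finite
  meas : ∀ j, ∀ Q ∈ cubes j, MeasurableSet Q
  zeroth : cubes 0 = {Set.univ}
  cover : ∀ j, ⋃₀ cubes j = Set.univ
  pdisjoint : ∀ j, (cubes j).PairwiseDisjoint id
  posMeasure : ∀ j, ∀ Q ∈ cubes j, 0 < μ Q
  ancestor : ∀ j, ∀ Q ∈ cubes (j + 1), ∃! P, P ∈ cubes j ∧ Q ⊂ P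
  inherit : ∀ j, ∀ Q ∈ cubes (j + 1), ∀ P ∈ cubes j, Q ⊂ P →
    (μ P).toReal ≤ B * (μ Q).toReal
  prob : μ Set.univ = 1

namespace DyadicFamily

variable {X : Type*} [MeasurableSpace X] {μ : MeasureTheory.Measure X} {B : ℝ}

/-- Membership in the dyadic family: `Q` is a cube of some level. -/
def Mem (D : DyadicFamily μ B) (Q : Set X) : Prop := ∃ j, Q ∈ D.cubes j

/-- The offspring of a cube `Q` of level `j`: the cubes of level `j+1`
strictly contained in `Q` (equivalently, whose first ancestor is `Q`). -/
def offspring (D : DyadicFamily μ B) (j : ℕ) (Q : Set X) : Set (Set X) :=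
  {Q' ∈ D.cubes (j + 1) | Q' ⊂ Q}

/-- The pseudo-ultrametric `δ_D(x,y) = inf {μ(Q) : x, y ∈ Q ∈ D}`. -/
noncomputable def delta (D : DyadicFamily μ B) (x y : X) : ℝ :=
  sInf {r : ℝ | ∃ Q, D.Mem Q ∧ x ∈ Q ∧ y ∈ Q ∧ r = (μ Q).toReal}

/-- The distance between two dyadic cubes via the smallest common dyadic ancestor. -/
noncomputable def cubeDist (D : DyadicFamily μ B) (Q₁ Q₂ : Set X) : ℝ :=
  sInf {r : ℝ | ∃ P, D.Mem P ∧ Q₁ ∪ Q₂ ⊆ P ∧ r = (μ P).toReal}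

/-- Mean value of `f` over `Q`. -/
noncomputable def avg (μ : MeasureTheory.Measure X) (f : X → ℝ) (Q : Set X) : ℝ :=
  ((μ Q).toReal)⁻¹ * ∫ x in Q, f x ∂μ

/-- `f` belongs to `V_{j,Q}`: it vanishes outside `Q` and is constant on each
offspring cube of `Q`. -/
def MemV (D : DyadicFamily μ B) (j : ℕ) (Q : Set X) (f : X → ℝ) : Prop :=
  (∀ Q' ∈ D.offspring j Q, ∃ c : ℝ, ∀ x ∈ Q', f x = c) ∧ ∀ x ∉ Q, f x = 0

end DyadicFamily

section Aux

open Filter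

namespace DyadicFamily

variable {X : Type*} [MeasurableSpace X] {μ : MeasureTheory.Measure X} {B : ℝ}

lemma mu_ne_top (D : DyadicFamily μ B) (Q : Set X) : μ Q ≠ ⊤ := by
  have h1 : μ Q ≤ 1 := by
    rw [← D.prob]; exact measure_mono (subset_univ Q)
  exact ne_top_of_le_ne_top ENNReal.one_ne_top h1

lemma level_eq (D : DyadicFamily μ B) {j : ℕ} {P P' : Set X} (hP : P ∈ D.cubes j)
    (hP' : P' ∈ D.cubes j) {x : X} (hx : x ∈ P) (hx' : x ∈ P') : P = P' := by
  by_contra hne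
  exact Set.disjoint_left.1 (D.pdisjoint j hP hP' hne) hx hx'

lemma exists_level (D : DyadicFamily μ B) (j : ℕ) (x : X) : ∃ Q ∈ D.cubes j, x ∈ Q := by
  have := D.cover j
  rw [Set.sUnion_eq_univ_iff] at this
  exact this x

/-- The offspring of a cube as a `Finset`. -/
noncomputable def offF (D : DyadicFamily μ B) (j : ℕ) (P : Set X) : Finset (Set X) :=
  ((D.finiteLevel (j+1)).subset (show D.offspring j P ⊆ D.cubes (j+1) from fun Q hQ => hQ.1)).toFinset

lemma mem_offF {D : DyadicFamily μ B} {j : ℕ} {P Q : Set X} :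
    Q ∈ D.offF j P ↔ Q ∈ D.offspring j P := by
  simp [offF, Set.Finite.mem_toFinset]

lemma offspring_mem_level {D : DyadicFamily μ B} {j : ℕ} {P Q : Set X}
    (hQ : Q ∈ D.offspring j P) : Q ∈ D.cubes (j+1) := hQ.1

lemma offspring_ssubset {D : DyadicFamily μ B} {j : ℕ} {P Q : Set X}
    (hQ : Q ∈ D.offspring j P) : Q ⊂ P := hQ.2

lemma offspring_cover (D : DyadicFamily μ B) {j : ℕ} {P : Set X} (hP : P ∈ D.cubes j)
    {x : X} (hx : x ∈ P) : ∃ Q ∈ D.offspring j P, x ∈ Q := by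
  obtain ⟨Q, hQ, hxQ⟩ := D.exists_level (j+1) x
  obtain ⟨P', ⟨hP', hQP'⟩, -⟩ := D.ancestor j Q hQ
  have hPP : P' = P := D.level_eq hP' hP (hQP'.subset hxQ) hx
  exact ⟨Q, ⟨hQ, hPP ▸ hQP'⟩, hxQ⟩

lemma offF_disj (D : DyadicFamily μ B) (j : ℕ) (P : Set X) :
    Set.PairwiseDisjoint (↑(D.offF j P) : Set (Set X)) (id : Set X → Set X) := by
  intro Q hQ Q' hQ' hne
  have h1 : Q ∈ D.cubes (j+1) := (mem_offF.1 hQ).1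
  have h2 : Q' ∈ D.cubes (j+1) := (mem_offF.1 hQ').1
  exact D.pdisjoint (j+1) h1 h2 hne

lemma offF_biUnion (D : DyadicFamily μ B) {j : ℕ} {P : Set X} (hP : P ∈ D.cubes j) :
    ⋃ Q ∈ D.offF j P, Q = P := by
  ext x
  simp only [Set.mem_iUnion, exists_prop]
  constructor
  · rintro ⟨Q, hQ, hxQ⟩
    exact (offspring_ssubset (mem_offF.1 hQ)).subset hxQ
  · intro hx
    obtain ⟨Q, hQ, hxQ⟩ := D.offspring_cover hP hx
    exact ⟨Q, mem_offF.2 hQ, hxQ⟩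

lemma sum_measure_offF (D : DyadicFamily μ B) {j : ℕ} {P : Set X} (hP : P ∈ D.cubes j) :
    ∑ Q ∈ D.offF j P, (μ Q).toReal = (μ P).toReal := by
  have hm : ∀ Q ∈ D.offF j P, MeasurableSet Q := fun Q hQ =>
    D.meas (j+1) Q (mem_offF.1 hQ).1
  have h := measure_biUnion_finset (μ := μ) (D.offF_disj j P) hm
  simp only [id] at h
  rw [D.offF_biUnion hP] at h
  rw [h, ENNReal.toReal_sum (fun Q _ => D.mu_ne_top Q)]

lemma sum_setIntegral_offF (D : DyadicFamily μ B) {j : ℕ} {P : Set X} (hP : P ∈ D.cubes j)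
    (f : X → ℝ) (hf : MeasureTheory.Integrable f μ) :
    ∑ Q ∈ D.offF j P, ∫ x in Q, f x ∂μ = ∫ x in P, f x ∂μ := by
  have hm : ∀ Q ∈ D.offF j P, MeasurableSet Q := fun Q hQ =>
    D.meas (j+1) Q (mem_offF.1 hQ).1
  have h := MeasureTheory.integral_biUnion_finset (μ := μ) (f := f) (D.offF j P) hm
    (D.offF_disj j P) (fun Q _ => hf.integrableOn)
  rw [D.offF_biUnion hP] at h
  rw [h]

/-- Pointwise collapse: a function constant on offspring and vanishing outside `P`,
multiplied by any `F`, is a finite sum of indicators. -/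
lemma memV_eval (D : DyadicFamily μ B) {j : ℕ} {P : Set X} (hP : P ∈ D.cubes j)
    {g : X → ℝ} {w : Set X → ℝ} (hg0 : ∀ x ∉ P, g x = 0)
    (hw : ∀ Q ∈ D.offF j P, ∀ x ∈ Q, g x = w Q) (F : X → ℝ) (x : X) :
    F x * g x = ∑ Q ∈ D.offF j P, Q.indicator (fun z => w Q * F z) x := by
  by_cases hx : x ∈ P
  · obtain ⟨Q₀, hQ₀, hxQ₀⟩ := D.offspring_cover hP hx
    have hQ₀' : Q₀ ∈ D.offF j P := mem_offF.2 hQ₀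
    rw [Finset.sum_eq_single_of_mem Q₀ hQ₀']
    · rw [Set.indicator_of_mem hxQ₀, hw Q₀ hQ₀' x hxQ₀, mul_comm]
    · intro Q hQ hne
      have hxQ : x ∉ Q := fun hxQ =>
        Set.disjoint_left.1 (D.offF_disj j P hQ hQ₀' hne) hxQ hxQ₀
      exact Set.indicator_of_notMem hxQ _
  · rw [hg0 x hx, mul_zero]
    refine (Finset.sum_eq_zero fun Q hQ => ?_).symm
    have hxQ : x ∉ Q := fun hxQ =>
      hx ((offspring_ssubset (mem_offF.1 hQ)).subset hxQ)
    exact Set.indicator_of_notMem hxQ _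

/-- Integral form of the collapse. -/
lemma memV_integral (D : DyadicFamily μ B) {j : ℕ} {P : Set X} (hP : P ∈ D.cubes j)
    {g : X → ℝ} {w : Set X → ℝ} (hg0 : ∀ x ∉ P, g x = 0)
    (hw : ∀ Q ∈ D.offF j P, ∀ x ∈ Q, g x = w Q) (F : X → ℝ)
    (hF : MeasureTheory.Integrable F μ) :
    ∫ x, F x * g x ∂μ = ∑ Q ∈ D.offF j P, w Q * ∫ z in Q, F z ∂μ := by
  have hmQ : ∀ Q ∈ D.offF j P, MeasurableSet Q := fun Q hQ =>
    D.meas (j+1) Q (mem_offF.1 hQ).1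
  have h1 : ∫ x, F x * g x ∂μ
      = ∫ x, ∑ Q ∈ D.offF j P, Q.indicator (fun z => w Q * F z) x ∂μ := by
    exact MeasureTheory.integral_congr_ae
      (Filter.Eventually.of_forall fun x => D.memV_eval hP hg0 hw F x)
  rw [h1, MeasureTheory.integral_finset_sum]
  · refine Finset.sum_congr rfl fun Q hQ => ?_
    rw [MeasureTheory.integral_indicator (hmQ Q hQ), MeasureTheory.integral_const_mul]
  · exact fun Q hQ => ((hF.const_mul (w Q)).indicator (hmQ Q hQ))

/-- Functions in `V_{j,P}` are integrable. -/
lemma memV_integrable (D : DyadicFamily μ B) {j : ℕ} {P : Set X} (hP : P ∈ D.cubes j)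
    {g : X → ℝ} (hg : D.MemV j P g) : MeasureTheory.Integrable g μ := by
  haveI : IsFiniteMeasure μ := ⟨by rw [D.prob]; exact ENNReal.one_lt_top⟩
  choose! w hw using hg.1
  have hw' : ∀ Q ∈ D.offF j P, ∀ x ∈ Q, g x = w Q := fun Q hQ x hx =>
    hw Q (mem_offF.1 hQ) x hx
  have heq : ∀ x, g x = ∑ Q ∈ D.offF j P, Q.indicator (fun _ => w Q) x := by
    intro x
    have := D.memV_eval hP hg.2 hw' (fun _ => (1:ℝ)) x
    simpa using this
  rw [show g = fun x => ∑ Q ∈ D.offF j P, Q.indicator (fun _ => w Q) x from funext heq]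
  refine MeasureTheory.integrable_finset_sum _ fun Q hQ => ?_
  exact (MeasureTheory.integrable_const (w Q)).indicator
    (D.meas (j+1) Q (mem_offF.1 hQ).1)

end DyadicFamily

end Aux
/-- Assume in addition that `D` is a differentiation basis: for
`f ∈ L¹`, the averages over the cube of level `j` containing `x` converge to `f(x)` for
a.e. `x`. If the Haar coefficients satisfy `|⟨f, ψ^λ_{j,k}⟩| ≤ C μ(Q_{j,k})^{α+1/2}`,
then `|f(x) − f(y)| ≤ (2C B^α √(B(B−1)) / (B^α − (B−1)^α)) δ_D(x,y)^α` for almost every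
pair `(x,y)`. -/
theorem lipschitz_of_haar_coeff_of_diff_basis {X : Type*} [MeasurableSpace X]
    {μ : MeasureTheory.Measure X} {B : ℝ} (hB : 2 ≤ B) (D : DyadicFamily μ B)
    (α : ℝ) (hα : 0 < α) (C : ℝ) (hC : 0 < C)
    (f : X → ℝ) (hf : MeasureTheory.Integrable f μ)
    -- `c j x` is the unique cube of level `j` containing `x`
    (c : ℕ → X → Set X) (hc : ∀ j x, c j x ∈ D.cubes j ∧ x ∈ c j x)
    -- differentiation basis hypothesis
    (hdiff : ∀ᵐ x ∂μ, Filter.Tendsto (fun j => DyadicFamily.avg μ f (c j x))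
      Filter.atTop (nhds (f x)))
    -- the generalized Haar system of `D` and the coefficient power law
    (dimm : ℕ → Set X → ℕ) (ψ : ℕ → Set X → ℕ → X → ℝ)
    (hdim : ∀ j, ∀ Q ∈ D.cubes j, dimm j Q + 1 = (D.offspring j Q).ncard)
    (hV : ∀ j, ∀ Q ∈ D.cubes j, ∀ lam < dimm j Q, D.MemV j Q (ψ j Q lam))
    (hzero : ∀ j, ∀ Q ∈ D.cubes j, ∀ lam < dimm j Q, ∫ x, ψ j Q lam x ∂μ = 0)
    (hortho : ∀ j, ∀ Q ∈ D.cubes j, ∀ lam < dimm j Q, ∀ lam' < dimm j Q,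
      ∫ x, ψ j Q lam x * ψ j Q lam' x ∂μ = if lam = lam' then 1 else 0)
    (hspan : ∀ j, ∀ Q ∈ D.cubes j, ∀ g : X → ℝ, D.MemV j Q g → (∫ x, g x ∂μ) = 0 →
      ∃ cc : ℕ → ℝ, ∀ x, g x = ∑ lam ∈ Finset.range (dimm j Q), cc lam * ψ j Q lam x)
    (hcoeff : ∀ j, ∀ Q ∈ D.cubes j, ∀ lam < dimm j Q,
      |∫ x, f x * ψ j Q lam x ∂μ| ≤ C * (μ Q).toReal ^ (α + 1/2)) :
    ∀ᵐ p ∂(μ.prod μ),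
      |f p.1 - f p.2| ≤
        (2 * C * B ^ α * Real.sqrt (B * (B - 1)) / (B ^ α - (B - 1) ^ α)) *
          D.delta p.1 p.2 ^ α := by
  classical
  haveI : IsFiniteMeasure μ := ⟨by rw [D.prob]; exact ENNReal.one_lt_top⟩
  have hB0 : (0:ℝ) < B := by linarith
  have hB1 : (0:ℝ) < B - 1 := by linarith
  have hsqpos : 0 < Real.sqrt (B * (B-1)) := Real.sqrt_pos.2 (by positivity)
  set K₀ : ℝ := C * Real.sqrt (B * (B - 1)) with hK₀def
  have hK₀ : 0 < K₀ := by rw [hK₀def]; positivity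
  -- ==================== the key one-step estimate ====================
  have key : ∀ j : ℕ, ∀ P ∈ D.cubes j, ∀ Q ∈ D.offspring j P,
      |DyadicFamily.avg μ f Q - DyadicFamily.avg μ f P| ≤ K₀ * (μ P).toReal ^ α := by
    intro j P hP Q hQmem
    have hQO : Q ∈ D.offF j P := DyadicFamily.mem_offF.2 hQmem
    set O := D.offF j P with hO
    set n := dimm j P with hn
    have hMpos : 0 < (μ P).toReal :=
      ENNReal.toReal_pos (D.posMeasure j P hP).ne' (D.mu_ne_top P)
    set M := (μ P).toReal with hMdef
    have hposQ : ∀ R ∈ O, 0 < (μ R).toReal := fun R hR =>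
      ENNReal.toReal_pos (D.posMeasure (j+1) R (DyadicFamily.mem_offF.1 hR).1).ne'
        (D.mu_ne_top R)
    have hinh : ∀ R ∈ O, M ≤ B * (μ R).toReal := fun R hR =>
      D.inherit j R (DyadicFamily.mem_offF.1 hR).1 P hP (DyadicFamily.mem_offF.1 hR).2
    -- values of the Haar functions on offspring cubes
    choose! v hv using fun lam (hlam : lam < n) => (hV j P hP lam hlam).1
    have hψint : ∀ lam, lam < n → Integrable (ψ j P lam) μ := fun lam hlam =>
      D.memV_integrable hP (hV j P hP lam hlam)
    have hwv : ∀ lam, lam < n → ∀ R ∈ O, ∀ x ∈ R, ψ j P lam x = v lam R :=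
      fun lam hlam R hR x hx => hv lam hlam R (DyadicFamily.mem_offF.1 hR) x hx
    have hIF : ∀ (F : X → ℝ), Integrable F μ → ∀ lam, lam < n →
        ∫ x, F x * ψ j P lam x ∂μ = ∑ R ∈ O, v lam R * ∫ z in R, F z ∂μ :=
      fun F hF lam hlam =>
        D.memV_integral hP (hV j P hP lam hlam).2 (hwv lam hlam) F hF
    have hsetψ : ∀ lam, lam < n → ∀ R ∈ O,
        ∫ z in R, ψ j P lam z ∂μ = v lam R * (μ R).toReal := by
      intro lam hlam R hR
      have hmR : MeasurableSet R := D.meas (j+1) R (DyadicFamily.mem_offF.1 hR).1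
      rw [MeasureTheory.setIntegral_congr_fun hmR
        (fun x hx => hwv lam hlam R hR x hx : Set.EqOn _ (fun _ => v lam R) R),
        MeasureTheory.setIntegral_const, smul_eq_mul, mul_comm, measureReal_def]
    have horthoS : ∀ lam, lam < n → ∀ lam', lam' < n →
        ∑ R ∈ O, (μ R).toReal * (v lam R * v lam' R) = if lam = lam' then 1 else 0 := by
      intro lam hlam lam' hlam'
      calc ∑ R ∈ O, (μ R).toReal * (v lam R * v lam' R)
          = ∑ R ∈ O, v lam' R * ∫ z in R, ψ j P lam z ∂μ := by
            refine Finset.sum_congr rfl fun R hR => ?_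
            rw [hsetψ lam hlam R hR]; ring
        _ = ∫ x, ψ j P lam x * ψ j P lam' x ∂μ :=
            (hIF _ (hψint lam hlam) lam' hlam').symm
        _ = if lam = lam' then 1 else 0 := hortho j P hP lam hlam lam' hlam'
    have hzeroS : ∀ lam, lam < n → ∑ R ∈ O, (μ R).toReal * v lam R = 0 := by
      intro lam hlam
      have h1 := hIF (fun _ => (1:ℝ)) (integrable_const 1) lam hlam
      simp only [one_mul] at h1
      rw [hzero j P hP lam hlam] at h1
      calc ∑ R ∈ O, (μ R).toReal * v lam R
          = ∑ R ∈ O, v lam R * ∫ z in R, (1:ℝ) ∂μ := by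
            refine Finset.sum_congr rfl fun R hR => ?_
            rw [MeasureTheory.setIntegral_const, smul_eq_mul, mul_one, mul_comm, measureReal_def]
        _ = 0 := h1.symm
    -- averages
    have havg : ∀ R ∈ O, ∫ z in R, f z ∂μ = (μ R).toReal * DyadicFamily.avg μ f R := by
      intro R hR
      rw [DyadicFamily.avg, ← mul_assoc, mul_inv_cancel₀ (hposQ R hR).ne', one_mul]
    have havgP : ∫ z in P, f z ∂μ = M * DyadicFamily.avg μ f P := by
      rw [DyadicFamily.avg, ← mul_assoc, mul_inv_cancel₀ hMpos.ne', one_mul]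
    -- the projection function h
    set w : Set X → ℝ := fun R => DyadicFamily.avg μ f R - DyadicFamily.avg μ f P
      with hwdef
    set h : X → ℝ := fun x => ∑ R ∈ O, R.indicator (fun _ => w R) x with hhdef
    have hh0 : ∀ x ∉ P, h x = 0 := by
      intro x hx
      refine Finset.sum_eq_zero fun R hR => ?_
      have hxR : x ∉ R := fun hxR =>
        hx ((DyadicFamily.offspring_ssubset (DyadicFamily.mem_offF.1 hR)).subset hxR)
      exact Set.indicator_of_notMem hxR _
    have hhval : ∀ R ∈ O, ∀ x ∈ R, h x = w R := by
      intro R hR x hx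
      show (∑ R' ∈ O, R'.indicator (fun _ => w R') x) = w R
      rw [Finset.sum_eq_single_of_mem R hR]
      · exact Set.indicator_of_mem hx _
      · intro R' hR' hne
        have hxR' : x ∉ R' := fun hxR' =>
          Set.disjoint_left.1 (D.offF_disj j P hR' hR hne) hxR' hx
        exact Set.indicator_of_notMem hxR' _
    have hhMemV : D.MemV j P h :=
      ⟨fun R hR => ⟨w R, fun x hx => hhval R (DyadicFamily.mem_offF.2 hR) x hx⟩, hh0⟩
    have hhint0 : ∫ x, h x ∂μ = 0 := by
      have h1 := D.memV_integral hP hh0 hhval (fun _ => (1:ℝ)) (integrable_const 1)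
      simp only [one_mul] at h1
      rw [h1]
      have e1 : ∀ R ∈ O, w R * ∫ z in R, (1:ℝ) ∂μ
          = (∫ z in R, f z ∂μ) - DyadicFamily.avg μ f P * (μ R).toReal := by
        intro R hR
        rw [MeasureTheory.setIntegral_const, smul_eq_mul, mul_one, havg R hR, hwdef, measureReal_def]
        ring
      rw [Finset.sum_congr rfl e1, Finset.sum_sub_distrib,
        D.sum_setIntegral_offF hP f hf, ← Finset.mul_sum, D.sum_measure_offF hP,
        havgP]
      ring
    obtain ⟨cc, hcc⟩ := hspan j P hP h hhMemV hhint0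
    have hwexp : ∀ R ∈ O, w R = ∑ lam ∈ Finset.range n, cc lam * v lam R := by
      intro R hR
      obtain ⟨x, hx⟩ := nonempty_of_measure_ne_zero
        (D.posMeasure (j+1) R (DyadicFamily.mem_offF.1 hR).1).ne'
      have h1 := hcc x
      rw [hhval R hR x hx] at h1
      rw [h1]
      refine Finset.sum_congr rfl fun lam hlam => ?_
      rw [hwv lam (Finset.mem_range.1 hlam) R hR x hx]
    have hccval : ∀ lam', lam' < n →
        cc lam' = ∑ R ∈ O, (μ R).toReal * w R * v lam' R := by
      intro lam' hlam'
      refine Eq.symm ?_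
      calc ∑ R ∈ O, (μ R).toReal * w R * v lam' R
          = ∑ R ∈ O, ∑ lam ∈ Finset.range n,
              cc lam * ((μ R).toReal * (v lam R * v lam' R)) := by
            refine Finset.sum_congr rfl fun R hR => ?_
            rw [hwexp R hR, Finset.mul_sum, Finset.sum_mul]
            exact Finset.sum_congr rfl fun lam _ => by ring
        _ = ∑ lam ∈ Finset.range n, ∑ R ∈ O,
              cc lam * ((μ R).toReal * (v lam R * v lam' R)) := Finset.sum_comm
        _ = ∑ lam ∈ Finset.range n, cc lam *
              ∑ R ∈ O, (μ R).toReal * (v lam R * v lam' R) :=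
            Finset.sum_congr rfl fun lam _ => (Finset.mul_sum _ _ _).symm
        _ = ∑ lam ∈ Finset.range n, cc lam * (if lam = lam' then 1 else 0) := by
            refine Finset.sum_congr rfl fun lam hlam => ?_
            rw [horthoS lam (Finset.mem_range.1 hlam) lam' hlam']
        _ = cc lam' := by
            simp only [mul_ite, mul_one, mul_zero, Finset.sum_ite_eq',
              Finset.mem_range]
            rw [if_pos hlam']
    have hccint : ∀ lam, lam < n → cc lam = ∫ x, f x * ψ j P lam x ∂μ := by
      intro lam hlam
      rw [hIF f hf lam hlam, hccval lam hlam]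
      have e : ∀ R ∈ O, (μ R).toReal * w R * v lam R
          = v lam R * ∫ z in R, f z ∂μ
            - DyadicFamily.avg μ f P * ((μ R).toReal * v lam R) := by
        intro R hR
        rw [havg R hR, hwdef]; ring
      rw [Finset.sum_congr rfl e, Finset.sum_sub_distrib, ← Finset.mul_sum,
        hzeroS lam hlam, mul_zero, sub_zero]
    have hccbound : ∀ lam, lam < n → |cc lam| ≤ C * M ^ (α + 1/2) := by
      intro lam hlam
      rw [hccint lam hlam]
      exact hcoeff j P hP lam hlam
    -- the dimension is at most B - 1
    have hnB : (n : ℝ) ≤ B - 1 := by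
      have hle : ∀ R ∈ O, M / B ≤ (μ R).toReal := by
        intro R hR
        rw [div_le_iff₀ hB0, mul_comm]
        exact hinh R hR
      have hcard : (O.card : ℝ) * (M / B) ≤ M := by
        calc (O.card : ℝ) * (M / B) = ∑ _R ∈ O, M / B := by
              rw [Finset.sum_const, nsmul_eq_mul]
          _ ≤ ∑ R ∈ O, (μ R).toReal := Finset.sum_le_sum hle
          _ = M := D.sum_measure_offF hP
      have hMB : (0:ℝ) < M / B := by positivity
      have hcard' : (O.card : ℝ) ≤ B := by
        by_contra hlt
        push_neg at hlt
        have hBM : B * (M / B) = M := by field_simp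
        nlinarith [mul_lt_mul_of_pos_right hlt hMB]
      have hnc : (n : ℝ) + 1 = (O.card : ℝ) := by
        have h1 := hdim j P hP
        have h2 : (D.offspring j P).ncard = O.card := by
          rw [Set.ncard_eq_toFinset_card _ ((D.finiteLevel (j+1)).subset
            (fun R hR => hR.1))]
          rfl
        rw [h2] at h1
        exact_mod_cast h1
      linarith
    -- Bessel inequality at the cube Q
    have hm : 0 < (μ Q).toReal := hposQ Q hQO
    set m := (μ Q).toReal with hmdef
    have hQB : M ≤ B * m := hinh Q hQO
    have hbessel : ∑ lam ∈ Finset.range n, (v lam Q)^2 ≤ 1 / m := by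
      set b : ℕ → ℝ := fun lam => m * v lam Q with hbdef
      set S : Set X → ℝ := fun R => ∑ lam ∈ Finset.range n, b lam * v lam R with hSdef
      set e : Set X → ℝ := fun R => if R = Q then (1:ℝ) else 0 with hedef
      have hT1 : ∑ R ∈ O, (μ R).toReal * (e R)^2 = m := by
        have h1 : ∀ R ∈ O, (μ R).toReal * (e R)^2
            = if R = Q then (μ R).toReal else 0 := by
          intro R _
          rw [hedef]
          by_cases hRQ : R = Q <;> simp [hRQ]
        rw [Finset.sum_congr rfl h1,
          Finset.sum_ite_eq' O Q (fun R => (μ R).toReal), if_pos hQO]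
      have hT2 : ∑ R ∈ O, (μ R).toReal * (e R * S R)
          = ∑ lam ∈ Finset.range n, (b lam)^2 := by
        have h1 : ∀ R ∈ O, (μ R).toReal * (e R * S R)
            = if R = Q then m * S Q else 0 := by
          intro R _
          rw [hedef]
          by_cases hRQ : R = Q <;> simp [hRQ, hmdef]
        rw [Finset.sum_congr rfl h1, Finset.sum_ite_eq' O Q (fun _ => m * S Q),
          if_pos hQO, hSdef, Finset.mul_sum]
        refine Finset.sum_congr rfl fun lam _ => ?_
        rw [hbdef]; ring
      have hT3 : ∑ R ∈ O, (μ R).toReal * (S R)^2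
          = ∑ lam ∈ Finset.range n, (b lam)^2 := by
        have e1 : ∀ R ∈ O, (μ R).toReal * (S R)^2
            = ∑ lam ∈ Finset.range n, ∑ lam' ∈ Finset.range n,
                b lam * b lam' * ((μ R).toReal * (v lam R * v lam' R)) := by
          intro R _
          rw [hSdef, sq, Finset.sum_mul_sum, Finset.mul_sum]
          refine Finset.sum_congr rfl fun lam _ => ?_
          rw [Finset.mul_sum]
          exact Finset.sum_congr rfl fun lam' _ => by ring
        rw [Finset.sum_congr rfl e1, Finset.sum_comm]
        refine Finset.sum_congr rfl fun lam hlam => ?_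
        rw [Finset.sum_comm]
        have e3 : ∀ lam' ∈ Finset.range n,
            ∑ R ∈ O, b lam * b lam' * ((μ R).toReal * (v lam R * v lam' R))
            = b lam * b lam' * (if lam = lam' then 1 else 0) := by
          intro lam' hlam'
          rw [← Finset.mul_sum, horthoS lam (Finset.mem_range.1 hlam) lam'
            (Finset.mem_range.1 hlam')]
        rw [Finset.sum_congr rfl e3]
        simp only [mul_ite, mul_one, mul_zero, Finset.sum_ite_eq,
          Finset.mem_range]
        rw [if_pos (Finset.mem_range.1 hlam), sq]
      have hnn : (0:ℝ) ≤ ∑ R ∈ O, (μ R).toReal * (e R - S R)^2 :=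
        Finset.sum_nonneg fun R _ => mul_nonneg ENNReal.toReal_nonneg (sq_nonneg _)
      have hexp : ∑ R ∈ O, (μ R).toReal * (e R - S R)^2
          = m - ∑ lam ∈ Finset.range n, (b lam)^2 := by
        have h1 : ∀ R ∈ O, (μ R).toReal * (e R - S R)^2
            = ((μ R).toReal * (e R)^2 - 2 * ((μ R).toReal * (e R * S R)))
              + (μ R).toReal * (S R)^2 := fun R _ => by ring
        rw [Finset.sum_congr rfl h1, Finset.sum_add_distrib,
          Finset.sum_sub_distrib, hT1, hT3, ← Finset.mul_sum, hT2]
        ring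
      rw [hexp] at hnn
      have hsb : ∑ lam ∈ Finset.range n, (b lam)^2
          = m^2 * ∑ lam ∈ Finset.range n, (v lam Q)^2 := by
        rw [Finset.mul_sum]
        exact Finset.sum_congr rfl fun lam _ => by rw [hbdef]; ring
      rw [hsb] at hnn
      rw [le_div_iff₀ hm]
      nlinarith [hm]
    -- Cauchy–Schwarz and conclusion
    have hwQ : DyadicFamily.avg μ f Q - DyadicFamily.avg μ f P
        = ∑ lam ∈ Finset.range n, cc lam * v lam Q := hwexp Q hQO
    have hcs := Finset.sum_mul_sq_le_sq_mul_sq (Finset.range n) cc (fun lam => v lam Q)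
    have hsum1 : ∑ lam ∈ Finset.range n, (cc lam)^2
        ≤ (B-1) * (C * M ^ (α + 1/2))^2 := by
      have h1 : ∀ lam ∈ Finset.range n, (cc lam)^2 ≤ (C * M ^ (α + 1/2))^2 := by
        intro lam hlam
        rw [← sq_abs]
        exact pow_le_pow_left₀ (abs_nonneg _)
          (hccbound lam (Finset.mem_range.1 hlam)) 2
      calc ∑ lam ∈ Finset.range n, (cc lam)^2
          ≤ ∑ _lam ∈ Finset.range n, (C * M ^ (α + 1/2))^2 := Finset.sum_le_sum h1
        _ = (n : ℝ) * (C * M ^ (α + 1/2))^2 := by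
            rw [Finset.sum_const, Finset.card_range, nsmul_eq_mul]
        _ ≤ (B-1) * (C * M ^ (α + 1/2))^2 :=
            mul_le_mul_of_nonneg_right hnB (sq_nonneg _)
    have hsum2 : ∑ lam ∈ Finset.range n, (v lam Q)^2 ≤ B / M := by
      refine hbessel.trans ?_
      rw [div_le_div_iff₀ hm hMpos, one_mul]
      linarith
    have hfinal : (DyadicFamily.avg μ f Q - DyadicFamily.avg μ f P)^2
        ≤ (K₀ * M ^ α)^2 := by
      rw [hwQ]
      refine hcs.trans ?_
      have h2 : (∑ lam ∈ Finset.range n, (cc lam)^2)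
            * ∑ lam ∈ Finset.range n, ((fun lam => v lam Q) lam)^2
          ≤ ((B-1) * (C * M ^ (α + 1/2))^2) * (B / M) := by
        refine mul_le_mul hsum1 hsum2
          (Finset.sum_nonneg fun lam _ => sq_nonneg _) (by positivity)
      refine h2.trans (le_of_eq ?_)
      have hMα : (M ^ (α + 1/2))^2 = (M ^ α)^2 * M := by
        rw [← Real.rpow_natCast (M ^ (α + 1/2)) 2, ← Real.rpow_mul hMpos.le,
          ← Real.rpow_natCast (M ^ α) 2, ← Real.rpow_mul hMpos.le]
        rw [show (α + 1/2) * ((2:ℕ):ℝ) = α * ((2:ℕ):ℝ) + 1 by push_cast; ring]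
        rw [Real.rpow_add hMpos, Real.rpow_one]
      have hsq2 : Real.sqrt (B*(B-1)) ^ 2 = B * (B-1) :=
        Real.sq_sqrt (by positivity)
      have hK2 : (K₀ * M ^ α)^2 = C^2 * (B*(B-1)) * (M^α)^2 := by
        rw [hK₀def, mul_pow, mul_pow, hsq2]
      have hC2 : (C * M ^ (α + 1/2))^2 = C^2 * ((M^α)^2 * M) := by
        rw [mul_pow, hMα]
      rw [hK2, hC2]
      field_simp
    rw [← Real.sqrt_sq_eq_abs]
    exact (Real.sqrt_le_sqrt hfinal).trans_eq (Real.sqrt_sq (by positivity))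
  -- ==================== the chain structure ====================
  have hcu : ∀ (j : ℕ) (x : X) (P : Set X), P ∈ D.cubes j → x ∈ P → P = c j x :=
    fun j x P hP hx => D.level_eq hP (hc j x).1 hx (hc j x).2
  have hchain : ∀ (j : ℕ) (x : X), c (j+1) x ∈ D.offspring j (c j x) := by
    intro j x
    obtain ⟨P', ⟨hP', hsub⟩, -⟩ := D.ancestor j (c (j+1) x) (hc (j+1) x).1
    have hPc : P' = c j x := hcu j x P' hP' (hsub.subset (hc (j+1) x).2)
    exact ⟨(hc (j+1) x).1, hPc ▸ hsub⟩
  have hdecay : ∀ (j : ℕ) (x : X),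
      (μ (c (j+1) x)).toReal ≤ (B-1)/B * (μ (c j x)).toReal := by
    intro j x
    have hP : c j x ∈ D.cubes j := (hc j x).1
    have hQ : c (j+1) x ∈ D.offspring j (c j x) := hchain j x
    obtain ⟨hss, hne'⟩ := hQ.2
    have hzex : ∃ z ∈ c j x, z ∉ c (j+1) x := by
      by_contra hz
      push_neg at hz
      exact hne' hz
    obtain ⟨z, hzP, hzQ⟩ := hzex
    obtain ⟨Q', hQ', hzQ'⟩ := D.offspring_cover hP hzP
    have hneq : c (j+1) x ≠ Q' := fun h => hzQ (h ▸ hzQ')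
    have hsum : (μ (c (j+1) x)).toReal + (μ Q').toReal ≤ (μ (c j x)).toReal := by
      have hsub2 : ({c (j+1) x, Q'} : Finset (Set X)) ⊆ D.offF j (c j x) := by
        intro R hR
        rcases Finset.mem_insert.1 hR with h | h
        · exact h ▸ DyadicFamily.mem_offF.2 hQ
        · exact (Finset.mem_singleton.1 h) ▸ DyadicFamily.mem_offF.2 hQ'
      have h1 := Finset.sum_le_sum_of_subset_of_nonneg hsub2
        (fun R _ _ => ENNReal.toReal_nonneg (a := μ R))
      rw [Finset.sum_pair hneq, D.sum_measure_offF hP] at h1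
      exact h1
    have hQ'B : (μ (c j x)).toReal ≤ B * (μ Q').toReal :=
      D.inherit j Q' hQ'.1 (c j x) hP hQ'.2
    have hQ'lb : (μ (c j x)).toReal / B ≤ (μ Q').toReal := by
      rw [div_le_iff₀ hB0, mul_comm]; exact hQ'B
    have heq : (B-1)/B * (μ (c j x)).toReal
        = (μ (c j x)).toReal - (μ (c j x)).toReal / B := by
      field_simp
    rw [heq]
    linarith
  have hiter : ∀ (x : X) (j0 k : ℕ),
      (μ (c (j0+k) x)).toReal ≤ ((B-1)/B)^k * (μ (c j0 x)).toReal := by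
    intro x j0 k
    induction k with
    | zero => simp
    | succ k ih =>
      have hr0 : (0:ℝ) ≤ (B-1)/B := by positivity
      calc (μ (c (j0+(k+1)) x)).toReal
          ≤ (B-1)/B * (μ (c (j0+k) x)).toReal := hdecay (j0+k) x
        _ ≤ (B-1)/B * (((B-1)/B)^k * (μ (c j0 x)).toReal) :=
            mul_le_mul_of_nonneg_left ih hr0
        _ = ((B-1)/B)^(k+1) * (μ (c j0 x)).toReal := by ring
  -- geometric control
  have hr0 : (0:ℝ) ≤ (B-1)/B := by positivity
  have hr1 : (B-1)/B < 1 := (div_lt_one hB0).2 (by linarith)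
  set q : ℝ := ((B-1)/B) ^ α with hqdef
  have hq0 : 0 ≤ q := Real.rpow_nonneg hr0 α
  have hq1 : q < 1 := Real.rpow_lt_one hr0 hr1 hα
  have h1q : (0:ℝ) < 1 - q := sub_pos.2 hq1
  have hstepk : ∀ (x : X) (j0 k : ℕ),
      |DyadicFamily.avg μ f (c (j0+k+1) x) - DyadicFamily.avg μ f (c (j0+k) x)|
        ≤ K₀ * (μ (c j0 x)).toReal ^ α * q ^ k := by
    intro x j0 k
    have h1 := key (j0+k) (c (j0+k) x) (hc (j0+k) x).1 (c (j0+k+1) x) (hchain (j0+k) x)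
    have h2 : (μ (c (j0+k) x)).toReal ^ α ≤ q ^ k * (μ (c j0 x)).toReal ^ α := by
      have h3 := hiter x j0 k
      have h4 : (μ (c (j0+k) x)).toReal ^ α
          ≤ (((B-1)/B)^k * (μ (c j0 x)).toReal) ^ α :=
        Real.rpow_le_rpow ENNReal.toReal_nonneg h3 hα.le
      rw [Real.mul_rpow (by positivity) ENNReal.toReal_nonneg,
        ← Real.rpow_natCast ((B-1)/B) k, ← Real.rpow_mul hr0,
        mul_comm ((k:ℕ):ℝ) α, Real.rpow_mul hr0, Real.rpow_natCast] at h4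
      rw [hqdef]
      exact h4
    calc |DyadicFamily.avg μ f (c (j0+k+1) x) - DyadicFamily.avg μ f (c (j0+k) x)|
        ≤ K₀ * (μ (c (j0+k) x)).toReal ^ α := h1
      _ ≤ K₀ * (q ^ k * (μ (c j0 x)).toReal ^ α) :=
          mul_le_mul_of_nonneg_left h2 hK₀.le
      _ = K₀ * (μ (c j0 x)).toReal ^ α * q ^ k := by ring
  have hgeom : ∀ N : ℕ, ∑ k ∈ Finset.range N, q ^ k ≤ (1 - q)⁻¹ := by
    intro N
    rw [geom_sum_eq hq1.ne N]
    rw [show (q ^ N - 1)/(q - 1) = (1 - q ^ N)/(1 - q) by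
      rw [div_eq_div_iff (by linarith : q - 1 ≠ 0) h1q.ne']; ring]
    rw [div_le_iff₀ h1q, inv_mul_cancel₀ h1q.ne']
    have := pow_nonneg hq0 N
    linarith
  have htelsum : ∀ (x : X) (j0 N : ℕ),
      |DyadicFamily.avg μ f (c (j0 + N) x) - DyadicFamily.avg μ f (c j0 x)|
        ≤ ∑ k ∈ Finset.range N, K₀ * (μ (c j0 x)).toReal ^ α * q ^ k := by
    intro x j0 N
    induction N with
    | zero => simp
    | succ N ih =>
      calc |DyadicFamily.avg μ f (c (j0 + (N+1)) x) - DyadicFamily.avg μ f (c j0 x)|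
          ≤ |DyadicFamily.avg μ f (c (j0 + N + 1) x)
                - DyadicFamily.avg μ f (c (j0 + N) x)|
              + |DyadicFamily.avg μ f (c (j0 + N) x) - DyadicFamily.avg μ f (c j0 x)| :=
            abs_sub_le _ _ _
        _ ≤ K₀ * (μ (c j0 x)).toReal ^ α * q ^ N
              + ∑ k ∈ Finset.range N, K₀ * (μ (c j0 x)).toReal ^ α * q ^ k :=
            add_le_add (hstepk x j0 N) ih
        _ = ∑ k ∈ Finset.range (N+1), K₀ * (μ (c j0 x)).toReal ^ α * q ^ k := by
            rw [Finset.sum_range_succ]; ring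
  have htel : ∀ (x : X) (j0 N : ℕ),
      |DyadicFamily.avg μ f (c (j0 + N) x) - DyadicFamily.avg μ f (c j0 x)|
        ≤ K₀ * (μ (c j0 x)).toReal ^ α * (1 - q)⁻¹ := by
    intro x j0 N
    refine (htelsum x j0 N).trans ?_
    rw [← Finset.mul_sum]
    exact mul_le_mul_of_nonneg_left (hgeom N)
      (mul_nonneg hK₀.le (Real.rpow_nonneg ENNReal.toReal_nonneg α))
  -- ==================== passing to the limit ====================
  have hlim : ∀ x : X,
      Filter.Tendsto (fun j => DyadicFamily.avg μ f (c j x)) Filter.atTop (nhds (f x)) →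
      ∀ (j0 : ℕ) (P : Set X), P ∈ D.cubes j0 → x ∈ P →
      |f x - DyadicFamily.avg μ f P| ≤ K₀ * (μ P).toReal ^ α * (1 - q)⁻¹ := by
    intro x hx j0 P hP hxP
    have hPc : P = c j0 x := hcu j0 x P hP hxP
    rw [hPc]
    have h1 : Filter.Tendsto
        (fun J => |DyadicFamily.avg μ f (c J x) - DyadicFamily.avg μ f (c j0 x)|)
        Filter.atTop (nhds (|f x - DyadicFamily.avg μ f (c j0 x)|)) :=
      ((hx.sub_const _).abs)
    refine le_of_tendsto h1 ?_
    filter_upwards [Filter.eventually_ge_atTop j0] with J hJ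
    obtain ⟨N, rfl⟩ := Nat.exists_eq_add_of_le hJ
    exact htel x j0 N
  -- constant bookkeeping
  have hBα : (0:ℝ) < B ^ α := Real.rpow_pos_of_pos hB0 α
  have hden : (0:ℝ) < B ^ α - (B-1) ^ α :=
    sub_pos.2 (Real.rpow_lt_rpow (by linarith) (by linarith) hα)
  have hqeq : 1 - q = (B ^ α - (B-1) ^ α) / B ^ α := by
    rw [hqdef, Real.div_rpow (by linarith) hB0.le]
    field_simp
  have hKeq : 2 * C * B ^ α * Real.sqrt (B * (B - 1)) / (B ^ α - (B - 1) ^ α)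
      = 2 * K₀ * (1 - q)⁻¹ := by
    rw [hqeq, hK₀def, inv_div]
    field_simp
  have hKpos : (0:ℝ) < 2 * C * B ^ α * Real.sqrt (B * (B - 1)) / (B ^ α - (B - 1) ^ α) := by
    rw [hKeq]
    exact mul_pos (mul_pos two_pos hK₀) (inv_pos.2 h1q)
  -- ==================== the pairwise bound ====================
  have hpair : ∀ x y : X,
      Filter.Tendsto (fun j => DyadicFamily.avg μ f (c j x)) Filter.atTop (nhds (f x)) →
      Filter.Tendsto (fun j => DyadicFamily.avg μ f (c j y)) Filter.atTop (nhds (f y)) →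
      |f x - f y| ≤ (2 * C * B ^ α * Real.sqrt (B * (B - 1)) / (B ^ α - (B - 1) ^ α))
        * D.delta x y ^ α := by
    intro x y hx hy
    set S : Set ℝ := {r : ℝ | ∃ Q, D.Mem Q ∧ x ∈ Q ∧ y ∈ Q ∧ r = (μ Q).toReal}
      with hSdef
    have hcube : ∀ s ∈ S,
        |f x - f y| ≤ (2 * C * B ^ α * Real.sqrt (B * (B - 1))
          / (B ^ α - (B - 1) ^ α)) * s ^ α := by
      rintro s ⟨P, ⟨j0, hPj⟩, hxP, hyP, rfl⟩
      have h1 := hlim x hx j0 P hPj hxP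
      have h2 := hlim y hy j0 P hPj hyP
      have h3 : |f x - f y| ≤ |f x - DyadicFamily.avg μ f P|
          + |f y - DyadicFamily.avg μ f P| := by
        have := abs_sub_le (f x) (DyadicFamily.avg μ f P) (f y)
        rwa [abs_sub_comm (DyadicFamily.avg μ f P) (f y)] at this
      rw [hKeq]
      calc |f x - f y| ≤ |f x - DyadicFamily.avg μ f P|
            + |f y - DyadicFamily.avg μ f P| := h3
        _ ≤ K₀ * (μ P).toReal ^ α * (1 - q)⁻¹ + K₀ * (μ P).toReal ^ α * (1 - q)⁻¹ :=
            add_le_add h1 h2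
        _ = 2 * K₀ * (1 - q)⁻¹ * (μ P).toReal ^ α := by ring
    have hSne : S.Nonempty := by
      refine ⟨(μ (Set.univ : Set X)).toReal, Set.univ, ⟨0, ?_⟩,
        Set.mem_univ x, Set.mem_univ y, rfl⟩
      rw [D.zeroth]
      exact Set.mem_singleton _
    have hSnon : ∀ s ∈ S, (0:ℝ) ≤ s := by
      rintro s ⟨P, -, -, -, rfl⟩
      exact ENNReal.toReal_nonneg
    set KK : ℝ := 2 * C * B ^ α * Real.sqrt (B * (B - 1)) / (B ^ α - (B - 1) ^ α)
      with hKKdef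
    set a : ℝ := |f x - f y| / KK with hadef
    have ha0 : 0 ≤ a := div_nonneg (abs_nonneg _) hKpos.le
    have haS : ∀ s ∈ S, a ^ α⁻¹ ≤ s := by
      intro s hs
      have h1 : a ≤ s ^ α := by
        rw [hadef, div_le_iff₀ hKpos, mul_comm]
        exact hcube s hs
      have h2 : a ^ α⁻¹ ≤ (s ^ α) ^ α⁻¹ :=
        Real.rpow_le_rpow ha0 h1 (by positivity)
      rwa [Real.rpow_rpow_inv (hSnon s hs) hα.ne'] at h2
    have hinf : a ^ α⁻¹ ≤ sInf S := le_csInf hSne haS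
    have hfin : a ≤ (sInf S) ^ α := by
      have h3 : (a ^ α⁻¹) ^ α ≤ (sInf S) ^ α :=
        Real.rpow_le_rpow (Real.rpow_nonneg ha0 _) hinf hα.le
      rwa [Real.rpow_inv_rpow ha0 hα.ne'] at h3
    have h4 : |f x - f y| ≤ KK * (sInf S) ^ α := by
      rw [hadef, div_le_iff₀ hKpos] at hfin
      linarith [hfin]
    exact h4
  -- ==================== almost everywhere on the product ====================
  have hnull : μ {x | ¬ Filter.Tendsto (fun j => DyadicFamily.avg μ f (c j x))
      Filter.atTop (nhds (f x))} = 0 := MeasureTheory.ae_iff.1 hdiff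
  obtain ⟨t, hts, htm, htnull⟩ := MeasureTheory.exists_measurable_superset_of_null hnull
  rw [MeasureTheory.ae_iff]
  refine measure_mono_null (fun p hp => ?_)
    (?_ : (μ.prod μ) ((t ×ˢ (Set.univ : Set X)) ∪ ((Set.univ : Set X) ×ˢ t)) = 0)
  · simp only [Set.mem_setOf_eq] at hp
    by_contra hpt
    simp only [Set.mem_union, Set.mem_prod, Set.mem_univ, and_true, true_and,
      not_or] at hpt
    obtain ⟨h1, h2⟩ := hpt
    have hx : Filter.Tendsto (fun j => DyadicFamily.avg μ f (c j p.1))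
        Filter.atTop (nhds (f p.1)) := by
      by_contra hT
      exact h1 (hts hT)
    have hy : Filter.Tendsto (fun j => DyadicFamily.avg μ f (c j p.2))
        Filter.atTop (nhds (f p.2)) := by
      by_contra hT
      exact h2 (hts hT)
    exact hp (hpair p.1 p.2 hx hy)
  · refine measure_union_null ?_ ?_
    · rw [MeasureTheory.Measure.prod_prod, htnull, zero_mul]
    · rw [MeasureTheory.Measure.prod_prod, htnull, mul_zero]
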